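/- Let X be a probability space, ≈ reflexive symmetric with D(x) = {y : y ≈ x} measurable and μ(D(x)) > 0 for all x, and Ω a regular world model with k̄ = sup_x μ(Ω_{i(x)})/μ(D(x)) < ∞. If R is a classifier whose recall rates are all ≤ ρ̄ with ρ̄·k̄ < 1, then for every correctly classified input x (x ∈ R_{i(x)}), μ(D(x) ∩ R_{i(x)}) / μ(D(x)) ≤ ρ̄·k̄ < 1, hence D(x) \ R_{i(x)} has positive measure and x has an adversarial doppelgänger. -/

import Mathlib

open MeasureTheory

theorem low_recall_correct_inputs_have_adversarial_doppelgangers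
    {X : Type*} [MeasurableSpace X]
    (μ : Measure X) [IsProbabilityMeasure μ] {m : ℕ}
    (r : X → X → Prop) (hrefl : Reflexive r) (hsymm : Symmetric r)
    (D : X → Set X) (hD : ∀ x, D x = {y | r y x})
    (hDmeas : ∀ x, MeasurableSet (D x))
    (hDpos : ∀ x, 0 < μ (D x))
    (Ω : Fin m → Set X) (hΩmeas : ∀ j, MeasurableSet (Ω j))
    (hΩpos : ∀ j, 0 < μ (Ω j))
    (i : X → Fin m) (hi : ∀ x, x ∈ Ω (i x))
    (hreg : ∀ x, D x ⊆ Ω (i x))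
    (R : Fin m → Set X) (hRmeas : ∀ j, MeasurableSet (R j))
    (k : ℝ) (hk : 0 < k)
    (hksup : ∀ x, (μ (Ω (i x))).toReal ≤ k * (μ (D x)).toReal)
    (ρ : ℝ) (hρ : 0 ≤ ρ) (hρk : ρ * k < 1)
    (hrecall : ∀ j, (μ (R j ∩ Ω j)).toReal ≤ ρ * (μ (Ω j)).toReal) :
    ∀ x : X, x ∈ R (i x) →
      (μ (D x ∩ R (i x))).toReal ≤ ρ * k * (μ (D x)).toReal ∧
      0 < μ (D x \ R (i x)) := by
  intro x hx
  have hfin : ∀ s : Set X, μ s ≠ ⊤ := fun s => (measure_lt_top μ s).ne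
  have h1 : μ (D x ∩ R (i x)) ≤ μ (R (i x) ∩ Ω (i x)) := by
    apply measure_mono
    intro y hy
    exact ⟨hy.2, hreg x hy.1⟩
  have h1' : (μ (D x ∩ R (i x))).toReal ≤ (μ (R (i x) ∩ Ω (i x))).toReal :=
    ENNReal.toReal_mono (hfin _) h1
  have h2 : (μ (D x ∩ R (i x))).toReal ≤ ρ * k * (μ (D x)).toReal := by
    calc (μ (D x ∩ R (i x))).toReal ≤ ρ * (μ (Ω (i x))).toReal :=
          h1'.trans (hrecall (i x))
      _ ≤ ρ * (k * (μ (D x)).toReal) := by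
          exact mul_le_mul_of_nonneg_left (hksup x) hρ
      _ = ρ * k * (μ (D x)).toReal := by ring
  refine ⟨h2, ?_⟩
  have hDr : 0 < (μ (D x)).toReal := ENNReal.toReal_pos (hDpos x).ne' (hfin _)
  have hlt : (μ (D x ∩ R (i x))).toReal < (μ (D x)).toReal := by
    calc (μ (D x ∩ R (i x))).toReal ≤ ρ * k * (μ (D x)).toReal := h2
      _ < 1 * (μ (D x)).toReal := by
          exact mul_lt_mul_of_pos_right hρk hDr
      _ = (μ (D x)).toReal := one_mul _
  have hlt' : μ (D x ∩ R (i x)) < μ (D x) :=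
    (ENNReal.toReal_lt_toReal (hfin _) (hfin _)).mp hlt
  have hsplit : μ (D x) ≤ μ (D x ∩ R (i x)) + μ (D x \ R (i x)) := by
    rw [← measure_inter_add_diff (D x) (hRmeas (i x))]
  by_contra h
  push_neg at h
  have : μ (D x \ R (i x)) = 0 := le_antisymm h zero_le
  rw [this, add_zero] at hsplit
  exact absurd hsplit (not_le.mpr hlt')
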